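/- Assume that A is semisimple as a module over the group algebra k[G] (for the action of G on A by the given algebra automorphisms), and let V be an (A,G)-module that is semisimple as a k[G]-module. Then the space of G-invariants V^G is a module over the invariant subalgebra A^G, and the length of V^G as an A^G-module is at most Len_{A,G}(V). (Proposition 2.2 of the paper; there G is a reductive algebraic group acting rationally in characteristic 0, so both semisimplicity hypotheses hold automatically.) -/

import Mathlib

/-- A submodule `W` of an `A`-module `V` is stable under a `k`-linear action
`σ` of a group `G` on `V`. -/
def IsStableSubmodule (A : Type*) {k G V : Type*} [Field k] [Group G] [AddCommGroup V]
    [Module k V] [Ring A] [Module A V]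
    (σ : G →* (V ≃ₗ[k] V)) (W : Submodule A V) : Prop :=
  ∀ g : G, ∀ v ∈ W, σ g v ∈ W

/-- The length `Len_{A,G}(V)` of an `(A,G)`-module `V`: the supremum of all `n`
for which there exists a strictly increasing chain `W₀ ⊊ W₁ ⊊ ⋯ ⊊ Wₙ` of
`G`-stable `A`-submodules of `V`. -/
noncomputable def lenAG (A : Type*) {k G V : Type*} [Field k] [Group G] [AddCommGroup V]
    [Module k V] [Ring A] [Module A V] (σ : G →* (V ≃ₗ[k] V)) : ℕ∞ :=
  ⨆ (n : ℕ) (_ : ∃ W : Fin (n + 1) → Submodule A V,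
      StrictMono W ∧ ∀ i, IsStableSubmodule A σ (W i)), (n : ℕ∞)

/-- The length of the space of invariants `V^G` as a module over the invariant
subalgebra `A^G`: the supremum of all `n` for which there is a strictly
increasing chain `W₀ ⊊ ⋯ ⊊ Wₙ` of `A^G`-submodules of `V^G` (encoded as
`k`-submodules of `V` consisting of `G`-invariant vectors and stable under
multiplication by every `G`-invariant element of `A`). -/
noncomputable def lenInvariants (A : Type*) {k G V : Type*} [Field k] [Group G]
    [AddCommGroup V] [Module k V] [Ring A] [Algebra k A] [Module A V]
    (ρ : G →* (A ≃ₐ[k] A)) (σ : G →* (V ≃ₗ[k] V)) : ℕ∞ :=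
  ⨆ (n : ℕ) (_ : ∃ W : Fin (n + 1) → Submodule k V,
      StrictMono W ∧ ∀ i,
        (∀ v ∈ W i, ∀ g : G, σ g v = v) ∧
        (∀ a : A, (∀ g : G, ρ g a = a) → ∀ v ∈ W i, a • v ∈ W i)), (n : ℕ∞)

/-- Proposition 2.2: if `A` and `V` are semisimple as `k[G]`-modules (i.e. every
`G`-stable `k`-subspace admits a `G`-stable complement), then the length of
`V^G` as an `A^G`-module is at most `Len_{A,G}(V)`. -/
theorem lenInvariants_le_lenAG
    {k A G V : Type*} [Field k] [Ring A] [Algebra k A] [Group G]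
    [AddCommGroup V] [Module k V] [Module A V] [IsScalarTower k A V]
    (ρ : G →* (A ≃ₐ[k] A)) (σ : G →* (V ≃ₗ[k] V))
    (hcompat : ∀ (g : G) (a : A) (v : V), σ g (a • v) = (ρ g a) • (σ g v))
    (hAss : ∀ W : Submodule k A, (∀ g : G, ∀ a ∈ W, ρ g a ∈ W) →
      ∃ W' : Submodule k A, (∀ g : G, ∀ a ∈ W', ρ g a ∈ W') ∧ IsCompl W W')
    (hVss : ∀ W : Submodule k V, (∀ g : G, ∀ v ∈ W, σ g v ∈ W) →
      ∃ W' : Submodule k V, (∀ g : G, ∀ v ∈ W', σ g v ∈ W') ∧ IsCompl W W') :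
    lenInvariants A ρ σ ≤ lenAG A σ := by
  classical
  -- the invariant subspace of V
  set Vinv : Submodule k V :=
    { carrier := {v | ∀ g : G, σ g v = v}
      add_mem' := fun ha hb g => by simp [map_add, ha g, hb g]
      zero_mem' := fun g => by simp
      smul_mem' := fun c v hv g => by simp [map_smul, hv g] } with hVinv
  have hVinvMem : ∀ v : V, v ∈ Vinv ↔ ∀ g : G, σ g v = v := fun v => Iff.rfl
  obtain ⟨C, hCst, hC⟩ := hVss Vinv (fun g v hv => by
    have h1 : σ g v = v := hv g
    rw [h1]; exact hv)
  -- the projection onto Vinv along C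
  set P : V →ₗ[k] V := Vinv.subtype.comp (Vinv.projectionOnto C hC) with hP
  have hPid : ∀ v ∈ Vinv, P v = v := fun v hv => by
    simp [hP, Submodule.projectionOnto_apply_left hC ⟨v, hv⟩]
  have hPC : ∀ v ∈ C, P v = 0 := fun v hv => by
    simp [hP, Submodule.projectionOnto_apply_of_mem_right hC hv]
  have hPσ : ∀ (g : G) (x : V), P (σ g x) = P x := by
    intro g x
    obtain ⟨u, hu, c, hc, rfl⟩ := Submodule.mem_sup.mp
      (by rw [hC.sup_eq_top]; trivial : x ∈ Vinv ⊔ C)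
    have h1 : σ g u = u := hu g
    simp only [map_add, h1]
    rw [hPC _ hc, hPC _ (hCst g c hc)]
  -- the A side: the "augmentation" subspace N and its invariant complement
  set N : Submodule k A := Submodule.span k {x | ∃ (g : G) (a : A), ρ g a - a = x} with hN
  have hNgen : ∀ (g : G) (a : A), ρ g a - a ∈ N :=
    fun g a => Submodule.subset_span ⟨g, a, rfl⟩
  have hNst : ∀ g : G, ∀ a ∈ N, ρ g a ∈ N := by
    intro g a ha
    induction ha using Submodule.span_induction with
    | mem x hx =>
      obtain ⟨g', a', rfl⟩ := hx
      have heq : ρ g (ρ g' a' - a') = (ρ (g * g') a' - a') - (ρ g a' - a') := by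
        rw [map_mul]
        show ρ g (ρ g' a' - a') = (ρ g (ρ g' a') - a') - (ρ g a' - a')
        rw [map_sub]; abel
      rw [heq]
      exact sub_mem (hNgen _ _) (hNgen _ _)
    | zero => simp only [map_zero]; exact N.zero_mem
    | add x y hx hy ihx ihy => rw [map_add]; exact N.add_mem ihx ihy
    | smul c x hx ihx => rw [map_smul]; exact N.smul_mem c ihx
  obtain ⟨C', hC'st, hC'⟩ := hAss N hNst
  have hC'inv : ∀ c ∈ C', ∀ g : G, ρ g c = c := by
    intro c hc g
    have h1 : ρ g c - c ∈ N := hNgen g c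
    have h2 : ρ g c - c ∈ C' := C'.sub_mem (hC'st g c hc) hc
    have h3 : ρ g c - c ∈ N ⊓ C' := ⟨h1, h2⟩
    rw [hC'.inf_eq_bot, Submodule.mem_bot] at h3
    exact sub_eq_zero.mp h3
  -- decomposition of any `a : A` into an invariant part plus an element of `N`
  have hdec : ∀ a : A, ∃ a₀ n : A, (∀ g : G, ρ g a₀ = a₀) ∧ n ∈ N ∧ a = a₀ + n := by
    intro a
    obtain ⟨n, hn, c, hc, rfl⟩ := Submodule.mem_sup.mp
      (by rw [hC'.sup_eq_top]; trivial : a ∈ N ⊔ C')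
    exact ⟨c, n, hC'inv c hc, hn, (add_comm n c)⟩
  -- key fact: P of (element of N) • (invariant vector) is zero
  have hPN : ∀ (w : V), (∀ g : G, σ g w = w) → ∀ n ∈ N, P (n • w) = 0 := by
    intro w hw n hn
    induction hn using Submodule.span_induction with
    | mem x hx =>
      obtain ⟨g, a, rfl⟩ := hx
      have h1 : (ρ g a) • w = σ g (a • w) := by rw [hcompat, hw g]
      rw [sub_smul, map_sub, h1, hPσ, sub_self]
    | zero => rw [zero_smul, map_zero]
    | add x y hx hy ihx ihy => rw [add_smul, map_add, ihx, ihy, add_zero]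
    | smul c x hx ihx => rw [smul_assoc, map_smul, ihx, smul_zero]
  -- main argument
  unfold lenInvariants lenAG
  refine iSup_le fun n => iSup_le fun hW => ?_
  obtain ⟨W, hWmono, hWprop⟩ := hW
  set U : Fin (n + 1) → Submodule A V := fun i => Submodule.span A ((W i : Set V)) with hU
  have hWU : ∀ i, (W i : Set V) ⊆ U i := fun i => Submodule.subset_span
  have hkey : ∀ i, ∀ v ∈ U i, ∀ a : A, P (a • v) ∈ W i := by
    intro i v hv
    induction hv using Submodule.span_induction with
    | mem x hx =>
      intro a
      obtain ⟨a₀, m, ha₀, hm, rfl⟩ := hdec a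
      have hwx : ∀ g : G, σ g x = x := fun g => (hWprop i).1 x hx g
      have h1 : a₀ • x ∈ Vinv := (hVinvMem _).mpr fun g => by
        rw [hcompat, ha₀ g, hwx g]
      rw [add_smul, map_add, hPN x hwx m hm, add_zero, hPid _ h1]
      exact (hWprop i).2 a₀ ha₀ x hx
    | zero => intro a; rw [smul_zero, map_zero]; exact (W i).zero_mem
    | add x y hx hy ihx ihy =>
      intro a; rw [smul_add, map_add]; exact (W i).add_mem (ihx a) (ihy a)
    | smul b x hx ihx => intro a; rw [smul_smul]; exact ihx (a * b)
  have hUst : ∀ i, ∀ g : G, ∀ v ∈ U i, σ g v ∈ U i := by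
    intro i g v hv
    induction hv using Submodule.span_induction with
    | mem x hx => rw [(hWprop i).1 x hx g]; exact hWU i hx
    | zero => rw [map_zero]; exact (U i).zero_mem
    | add x y hx hy ihx ihy => rw [map_add]; exact (U i).add_mem ihx ihy
    | smul b x hx ihx => rw [hcompat]; exact (U i).smul_mem _ ihx
  have hUmono : StrictMono U := by
    intro i j hij
    rw [SetLike.lt_iff_le_and_exists]
    refine ⟨Submodule.span_mono (SetLike.coe_subset_coe.mpr (hWmono hij).le), ?_⟩
    obtain ⟨v, hvj, hvi⟩ := SetLike.exists_of_lt (hWmono hij)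
    refine ⟨v, hWU j hvj, fun hmem => hvi ?_⟩
    have h2 := hkey i v hmem 1
    rwa [one_smul, hPid v ((hVinvMem v).mpr fun g => (hWprop j).1 v hvj g)] at h2
  exact le_iSup₂ (f := fun (m : ℕ) (_ : ∃ W : Fin (m + 1) → Submodule A V,
      StrictMono W ∧ ∀ i, IsStableSubmodule A σ (W i)) => (m : ℕ∞)) n
    ⟨U, hUmono, fun i => hUst i⟩
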